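/- The sub-Hankel determinant f^{(r)}, for r ≥ 2, is an irreducible polynomial in k[x_0,...,x_r]. Indeed f^{(r)} = ±x_r^{r-1} x_0 + g(x_1,...,x_r) where g does not involve x_0, so f^{(r)} is of degree one in x_0 with content 1 over k[x_1,...,x_r]. -/

import Mathlib

open Matrix MvPolynomial

/-- The `r × r` generic sub-Hankel matrix in the variables `x_0,…,x_r`:
entry `(i,j)` is `x_{i+j}` if `i + j ≤ r` and `0` otherwise. -/
noncomputable def subHankel (k : Type*) [CommRing k] (r : ℕ) :
    Matrix (Fin r) (Fin r) (MvPolynomial (Fin (r + 1)) k) :=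
  Matrix.of fun i j =>
    if h : (i : ℕ) + (j : ℕ) ≤ r then MvPolynomial.X ⟨(i : ℕ) + (j : ℕ), Nat.lt_succ_of_le h⟩
    else 0

/-- The sub-Hankel determinant `f^{(r)}`. -/
noncomputable def subHankelDet (k : Type*) [CommRing k] (r : ℕ) :
    MvPolynomial (Fin (r + 1)) k :=
  (subHankel k r).det

section Aux

lemma det_antiTriangular {R : Type*} [CommRing R] {n : ℕ} (A : Matrix (Fin n) (Fin n) R)
    (hA : ∀ i j : Fin n, n ≤ (i : ℕ) + (j : ℕ) → A i j = 0) :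
    A.det = ((Equiv.Perm.sign (Fin.revPerm : Equiv.Perm (Fin n)) : ℤ) : R)
      * ∏ i : Fin n, A i i.rev := by
  have h1 : A = (A.submatrix id Fin.revPerm).submatrix id Fin.revPerm := by
    ext i j
    simp [Fin.rev_rev]
  have h2 : (A.submatrix id Fin.revPerm).BlockTriangular id := by
    intro i j hij
    simp only [Matrix.submatrix_apply, id_eq, Fin.revPerm_apply]
    apply hA
    have h3 : (j : ℕ) < i := hij
    have h4 : ((j.rev : Fin n) : ℕ) = n - (j + 1) := Fin.val_rev j
    have h5 : (i : ℕ) < n := i.isLt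
    omega
  rw [h1, Matrix.det_permute', Matrix.det_of_upperTriangular h2]
  simp [Fin.rev_rev]

lemma prime_X_mv {k : Type*} [CommRing k] [IsDomain k] {n : ℕ} (i : Fin (n + 1)) :
    Prime (X i : MvPolynomial (Fin (n + 1)) k) := by
  have h0 : Prime (X 0 : MvPolynomial (Fin (n + 1)) k) := by
    rw [← MulEquiv.prime_iff (finSuccEquiv k n).toMulEquiv]
    have : (finSuccEquiv k n).toMulEquiv (X 0) = Polynomial.X := by
      simp [finSuccEquiv_X_zero]
    rw [this]
    exact Polynomial.prime_X
  have := (MulEquiv.prime_iff (renameEquiv k (Equiv.swap (0 : Fin (n+1)) i)).toMulEquiv).mpr h0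
  simpa [renameEquiv_apply, rename_X, Equiv.swap_apply_left] using this

lemma finSuccEquiv_rename_succ {k : Type*} [CommRing k] {n : ℕ}
    (p : MvPolynomial (Fin n) k) :
    finSuccEquiv k n (rename Fin.succ p) = Polynomial.C p := by
  induction p using MvPolynomial.induction_on with
  | C a => simp [finSuccEquiv_apply]
  | add p q hp hq => simp [hp, hq]
  | mul_X p i hp => simp [hp, finSuccEquiv_X_succ]

end Aux

noncomputable def lowerSH (k : Type*) [CommRing k] (n : ℕ) :
    Matrix (Fin n) (Fin n) (MvPolynomial (Fin n) k) :=
  Matrix.of fun i j =>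
    if h : 1 ≤ (i : ℕ) + (j : ℕ) ∧ (i : ℕ) + (j : ℕ) ≤ n then
      X ⟨(i : ℕ) + (j : ℕ) - 1, by omega⟩ else 0

lemma subHankelDet_decomp (k : Type*) [CommRing k] (m : ℕ) :
    subHankelDet k (m + 2)
      = ((Equiv.Perm.sign (Fin.revPerm : Equiv.Perm (Fin (m + 1))) : ℤ) :
            MvPolynomial (Fin (m + 3)) k)
          * X (Fin.last (m + 2)) ^ (m + 1) * X 0
        + rename Fin.succ (lowerSH k (m + 2)).det := by
  classical
  set M := subHankel k (m + 2) with hM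
  set v : Fin (m + 2) → MvPolynomial (Fin (m + 3)) k :=
    fun j => if h : (j : ℕ) = 0 then 0 else X ⟨(j : ℕ), by omega⟩ with hv
  set w : Fin (m + 2) → MvPolynomial (Fin (m + 3)) k := Pi.single 0 (X 0) with hw
  set w1 : Fin (m + 2) → MvPolynomial (Fin (m + 3)) k := Pi.single 0 1 with hw1
  have hrow : M = M.updateRow 0 (v + w) := by
    ext i j
    rcases eq_or_ne i 0 with rfl | hi
    · rcases eq_or_ne j 0 with rfl | hj
      · simp [hM, subHankel, hv, hw, Pi.single_apply]
      · have hj' : (j : ℕ) ≠ 0 := fun h => hj (Fin.ext h)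
        have hle : (0 : ℕ) + (j : ℕ) ≤ m + 2 := by omega
        simp [hM, subHankel, hv, hw, Pi.single_apply, hj, hj', Matrix.updateRow_self, hle]
    · simp [Matrix.updateRow_ne hi]
  have hdet : M.det = (M.updateRow 0 v).det + (M.updateRow 0 w).det := by
    conv_lhs => rw [hrow]
    exact Matrix.det_updateRow_add M 0 v w
  -- second term
  have hsingle : w = (X 0 : MvPolynomial (Fin (m+3)) k) • w1 := by
    funext j
    rcases eq_or_ne j 0 with rfl | hj <;> simp [hw, hw1, Pi.single_apply, *]
  have hsub : (M.updateRow 0 w1).submatrix Fin.succ Fin.succ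
      = M.submatrix Fin.succ Fin.succ := by
    ext i j
    simp [Matrix.updateRow_ne (Fin.succ_ne_zero i)]
  have hminor : (M.updateRow 0 w1).det = (M.submatrix Fin.succ Fin.succ).det := by
    rw [Matrix.det_succ_row_zero]
    rw [Finset.sum_eq_single 0]
    · rw [show ((0 : Fin (m+2)).succAbove) = Fin.succ from Fin.succAbove_zero, hsub]
      simp [hw1]
    · intro j _ hj
      simp [hw1, Pi.single_apply, hj]
    · simp
  -- minor is anti-triangular
  have hanti : (M.submatrix Fin.succ Fin.succ).det
      = ((Equiv.Perm.sign (Fin.revPerm : Equiv.Perm (Fin (m + 1))) : ℤ) :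
            MvPolynomial (Fin (m + 3)) k) * X (Fin.last (m + 2)) ^ (m + 1) := by
    rw [det_antiTriangular]
    · congr 1
      have hentry : ∀ i : Fin (m+1), (M.submatrix Fin.succ Fin.succ) i i.rev
          = X (Fin.last (m + 2)) := by
        intro i
        have hrev : ((i.rev : Fin (m+1)) : ℕ) = m - i := by
          have := Fin.val_rev i
          omega
        have hle : ((i.succ : Fin (m+2)) : ℕ) + ((i.rev.succ : Fin (m+2)) : ℕ) ≤ m + 2 := by
          simp [Fin.val_succ, hrev]
          omega
        simp only [Matrix.submatrix_apply, hM, subHankel, Matrix.of_apply, dif_pos hle]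
        congr 1
        apply Fin.ext
        simp [Fin.val_succ, hrev, Fin.val_last]
        omega
      rw [Finset.prod_congr rfl (fun i _ => hentry i)]
      simp
    · intro i j hij
      simp only [Matrix.submatrix_apply, hM, subHankel, Matrix.of_apply]
      rw [dif_neg]
      simp only [Fin.val_succ]
      omega
  -- first term
  have hfirst : (M.updateRow 0 v).det = rename Fin.succ (lowerSH k (m + 2)).det := by
    have hmapdet := (rename (R := k) (Fin.succ : Fin (m+2) → Fin (m+3))).toRingHom.map_det
      (lowerSH k (m + 2))
    rw [RingHom.mapMatrix_apply] at hmapdet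
    rw [show ((rename (Fin.succ : Fin (m+2) → Fin (m+3))).toRingHom :
        MvPolynomial (Fin (m+2)) k →+* MvPolynomial (Fin (m+3)) k)
        = (rename (Fin.succ : Fin (m+2) → Fin (m+3)) : _ →ₐ[k] _).toRingHom from rfl] at hmapdet
    rw [show (rename (Fin.succ : Fin (m+2) → Fin (m+3)) (lowerSH k (m + 2)).det : _)
        = _ from hmapdet]
    congr 1
    ext i j
    rcases eq_or_ne i 0 with rfl | hi
    · rcases eq_or_ne j 0 with rfl | hj
      · simp [lowerSH, hv, Matrix.updateRow_self]
      · have hj' : (j : ℕ) ≠ 0 := fun h => hj (Fin.ext h)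
        simp only [Matrix.map_apply, lowerSH, Matrix.of_apply, Matrix.updateRow_self, hv,
          AlgHom.toRingHom_eq_coe, RingHom.coe_coe]
        rw [dif_neg hj']
        split_ifs with h
        · rw [rename_X]
          have hfin : Fin.succ (⟨((0 : Fin (m+2)) : ℕ) + (j : ℕ) - 1, by omega⟩ : Fin (m+2))
              = (⟨(j : ℕ), by omega⟩ : Fin (m+3)) := by
            apply Fin.ext
            simp [Fin.val_succ]
            omega
          rw [hfin]
        · exfalso
          have h0 : ((0 : Fin (m+2)) : ℕ) = 0 := rfl
          omega
    · have hi' : (i : ℕ) ≠ 0 := fun h => hi (Fin.ext h)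
      rw [Matrix.updateRow_ne hi]
      by_cases hle : (i : ℕ) + (j : ℕ) ≤ m + 2
      · simp only [Matrix.map_apply, lowerSH, Matrix.of_apply, hM, subHankel,
          AlgHom.toRingHom_eq_coe, RingHom.coe_coe]
        rw [dif_pos hle]
        split_ifs with h
        · rw [rename_X]
          have hfin : Fin.succ (⟨(i : ℕ) + (j : ℕ) - 1, by omega⟩ : Fin (m+2))
              = (⟨(i : ℕ) + (j : ℕ), by omega⟩ : Fin (m+3)) := by
            apply Fin.ext
            simp [Fin.val_succ]
            omega
          rw [hfin]
        · exfalso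
          omega
      · have hcond : ¬ (1 ≤ (i:ℕ) + (j : ℕ) ∧ (i:ℕ) + (j : ℕ) ≤ m + 2) := by omega
        simp [Matrix.map_apply, lowerSH, hcond, hM, subHankel, hle]
  have : (M.updateRow 0 w).det
      = ((Equiv.Perm.sign (Fin.revPerm : Equiv.Perm (Fin (m + 1))) : ℤ) :
            MvPolynomial (Fin (m + 3)) k) * X (Fin.last (m + 2)) ^ (m + 1) * X 0 := by
    rw [hsingle, Matrix.det_updateRow_smul, hminor, hanti]
    ring
  rw [subHankelDet, ← hM, hdet, hfirst, this]
  ring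

/-- Evaluating the lower sub-Hankel determinant at `x_last = 0` gives (up to sign) a
power of a variable, in particular it is nonzero. -/
lemma lowerSH_det_eval_ne_zero (k : Type*) [Field k] (m : ℕ) :
    (aeval (Function.update X (Fin.last (m + 1)) (0 : MvPolynomial (Fin (m + 2)) k)) :
        MvPolynomial (Fin (m + 2)) k →ₐ[k] MvPolynomial (Fin (m + 2)) k)
      (lowerSH k (m + 2)).det ≠ 0 := by
  classical
  set ψ : MvPolynomial (Fin (m + 2)) k →ₐ[k] MvPolynomial (Fin (m + 2)) k :=
    aeval (Function.update X (Fin.last (m + 1)) (0 : MvPolynomial (Fin (m + 2)) k)) with hψ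
  have hmapdet := ψ.toRingHom.map_det (lowerSH k (m + 2))
  rw [RingHom.mapMatrix_apply] at hmapdet
  have hψdet : ψ (lowerSH k (m + 2)).det = ((lowerSH k (m + 2)).map ψ).det := hmapdet
  rw [hψdet]
  have hanti : ((lowerSH k (m + 2)).map ψ).det
      = ((Equiv.Perm.sign (Fin.revPerm : Equiv.Perm (Fin (m + 2))) : ℤ) :
          MvPolynomial (Fin (m + 2)) k) * X (⟨m, by omega⟩ : Fin (m + 2)) ^ (m + 2) := by
    rw [det_antiTriangular]
    · congr 1
      have hentry : ∀ i : Fin (m + 2), ((lowerSH k (m + 2)).map ψ) i i.rev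
          = X (⟨m, by omega⟩ : Fin (m + 2)) := by
        intro i
        have hrev : ((i.rev : Fin (m + 2)) : ℕ) = m + 1 - i := by
          have := Fin.val_rev i
          omega
        have hcond : 1 ≤ (i : ℕ) + ((i.rev : Fin (m+2)) : ℕ)
            ∧ (i : ℕ) + ((i.rev : Fin (m+2)) : ℕ) ≤ m + 2 := by
          rw [hrev]
          omega
        have hi : (i : ℕ) < m + 2 := i.isLt
        simp only [Matrix.map_apply, lowerSH, Matrix.of_apply, dif_pos hcond, hψ, aeval_X]
        have hne : (⟨(i : ℕ) + ((i.rev : Fin (m+2)) : ℕ) - 1, by omega⟩ : Fin (m + 2))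
            ≠ Fin.last (m + 1) := by
          intro h
          have := congrArg Fin.val h
          simp [Fin.val_last, hrev] at this
          omega
        rw [Function.update_of_ne hne]
        congr 1
        apply Fin.ext
        simp [hrev]
        omega
      rw [Finset.prod_congr rfl (fun i _ => hentry i)]
      simp
    · intro i j hij
      by_cases hle : 1 ≤ (i : ℕ) + (j : ℕ) ∧ (i : ℕ) + (j : ℕ) ≤ m + 2
      · have heq : (i : ℕ) + (j : ℕ) = m + 2 := by omega
        simp only [Matrix.map_apply, lowerSH, Matrix.of_apply, dif_pos hle, hψ, aeval_X]
        have hlast : (⟨(i : ℕ) + (j : ℕ) - 1, by omega⟩ : Fin (m + 2)) = Fin.last (m + 1) := by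
          apply Fin.ext
          simp [Fin.val_last]
          omega
        rw [hlast, Function.update_self]
      · simp [Matrix.map_apply, lowerSH, hle]
  rw [hanti]
  apply mul_ne_zero
  · rcases Int.units_eq_one_or (Equiv.Perm.sign (Fin.revPerm : Equiv.Perm (Fin (m + 2)))) with h | h
      <;> rw [h] <;> simp
  · exact pow_ne_zero _ (MvPolynomial.X_ne_zero _)

/-- The sub-Hankel determinant `f^{(r)}` is irreducible for `r ≥ 2`; indeed
`f^{(r)} = ± x_r^{r-1} x_0 + g(x_1,…,x_r)` with `g` not involving `x_0`. -/
theorem subHankel_irreducible {k : Type*} [Field k] [CharZero k]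
    {r : ℕ} (hr : 2 ≤ r) :
    Irreducible (subHankelDet k r) ∧
    ∃ ε : k, (ε = 1 ∨ ε = -1) ∧
      ∃ g : MvPolynomial (Fin (r + 1)) k, (0 : Fin (r + 1)) ∉ g.vars ∧
        subHankelDet k r
          = MvPolynomial.C ε * MvPolynomial.X (Fin.last r) ^ (r - 1) *
              MvPolynomial.X (0 : Fin (r + 1)) + g := by
  classical
  obtain ⟨m, rfl⟩ : ∃ m, r = m + 2 := ⟨r - 2, by omega⟩
  set u : ℤˣ := Equiv.Perm.sign (Fin.revPerm : Equiv.Perm (Fin (m + 1))) with hu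
  set B : MvPolynomial (Fin (m + 2)) k := (lowerSH k (m + 2)).det with hB
  set g : MvPolynomial (Fin (m + 3)) k := rename Fin.succ B with hg
  have hdecomp := subHankelDet_decomp k m
  -- the structure statement
  have hvars : (0 : Fin (m + 3)) ∉ g.vars := by
    intro h0
    have := vars_rename Fin.succ B h0
    rw [Finset.mem_image] at this
    obtain ⟨i, -, hi⟩ := this
    exact Fin.succ_ne_zero i hi
  have hCε : (MvPolynomial.C (((u : ℤ) : k)) : MvPolynomial (Fin (m + 3)) k)
      = (((u : ℤ) : MvPolynomial (Fin (m + 3)) k)) :=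
    map_intCast (MvPolynomial.C : k →+* MvPolynomial (Fin (m + 3)) k) (u : ℤ)
  have hεor : (((u : ℤ) : k)) = 1 ∨ (((u : ℤ) : k)) = -1 := by
    rcases Int.units_eq_one_or u with h | h <;> rw [h] <;> simp
  -- irreducibility
  set X' : MvPolynomial (Fin (m + 2)) k := X (Fin.last (m + 1)) with hX'
  set a : MvPolynomial (Fin (m + 2)) k := ((u : ℤ) : MvPolynomial (Fin (m + 2)) k) * X' ^ (m + 1)
    with ha
  have hudvd : IsUnit ((u : ℤ) : MvPolynomial (Fin (m + 2)) k) := by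
    rcases Int.units_eq_one_or u with h | h <;> rw [h] <;> simp
  have ha0 : a ≠ 0 :=
    mul_ne_zero hudvd.ne_zero (pow_ne_zero _ (MvPolynomial.X_ne_zero _))
  set φ := finSuccEquiv k (m + 2) with hφ
  have hφf : φ (subHankelDet k (m + 2)) = Polynomial.C a * Polynomial.X + Polynomial.C B := by
    rw [hdecomp]
    rw [map_add, _root_.map_mul, _root_.map_mul, map_pow, map_intCast]
    rw [show (X (Fin.last (m + 2)) : MvPolynomial (Fin (m + 3)) k)
        = X ((Fin.last (m + 1)).succ) from by rw [Fin.succ_last]]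
    rw [hφ, finSuccEquiv_X_succ, finSuccEquiv_X_zero, finSuccEquiv_rename_succ]
    rw [ha, _root_.map_mul, map_pow, map_intCast]
  -- the key coprimality fact
  have key : ∀ c : MvPolynomial (Fin (m + 2)) k, c ∣ a → c ∣ B → IsUnit c := by
    intro c hca hcB
    by_contra hcu
    have hc0 : c ≠ 0 := by
      rintro rfl
      exact ha0 (zero_dvd_iff.mp hca)
    obtain ⟨p, hpirr, hpc⟩ := WfDvdMonoid.exists_irreducible_factor hcu hc0
    have hp : Prime p := UniqueFactorizationMonoid.irreducible_iff_prime.mp hpirr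
    have hpa : p ∣ a := hpc.trans hca
    have hpX : p ∣ X' ^ (m + 1) := by
      rcases hp.2.2 _ _ (ha ▸ hpa) with h | h
      · exact absurd (isUnit_of_dvd_unit h hudvd) hpirr.not_isUnit
      · exact h
    have hpX' : p ∣ X' := hp.dvd_of_dvd_pow hpX
    have hXirr : Irreducible X' := (prime_X_mv (Fin.last (m + 1))).irreducible
    have hassoc : Associated p X' := hpirr.associated_of_dvd hXirr hpX'
    have hXB : X' ∣ B := (hassoc.symm.dvd).trans (hpc.trans hcB)
    -- evaluate at X' = 0
    set ψ : MvPolynomial (Fin (m + 2)) k →ₐ[k] MvPolynomial (Fin (m + 2)) k :=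
      aeval (Function.update X (Fin.last (m + 1)) (0 : MvPolynomial (Fin (m + 2)) k)) with hψ
    have hψX' : ψ X' = 0 := by
      rw [hX', hψ, aeval_X, Function.update_self]
    obtain ⟨t, ht⟩ := hXB
    have : ψ B = 0 := by
      rw [ht, _root_.map_mul, hψX', zero_mul]
    exact lowerSH_det_eval_ne_zero k m (by rw [← hB, ← hψ]; exact this)
  -- irreducibility of the image polynomial
  have hq : Irreducible (Polynomial.C a * Polynomial.X + Polynomial.C B) := by
    set q : Polynomial (MvPolynomial (Fin (m + 2)) k) :=
      Polynomial.C a * Polynomial.X + Polynomial.C B with hqdef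
    have hqdeg : q.natDegree = 1 := by
      rw [hqdef, Polynomial.natDegree_add_C, Polynomial.natDegree_C_mul_X a ha0]
    have hq0 : q ≠ 0 := fun h => by simp [h] at hqdeg
    have hcoeff1 : q.coeff 1 = a := by
      simp [hqdef, Polynomial.coeff_C]
    have hcoeff0 : q.coeff 0 = B := by
      simp [hqdef, Polynomial.coeff_C]
    have hfactor : ∀ s t : Polynomial (MvPolynomial (Fin (m + 2)) k),
        q = s * t → s.natDegree = 0 → IsUnit s := by
      intro s t hst hs0
      obtain ⟨c, hc⟩ := Polynomial.natDegree_eq_zero.mp hs0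
      have hca : c ∣ a := by
        refine ⟨t.coeff 1, ?_⟩
        rw [← hcoeff1, hst, ← hc, Polynomial.coeff_C_mul]
      have hcB : c ∣ B := by
        refine ⟨t.coeff 0, ?_⟩
        rw [← hcoeff0, hst, ← hc, Polynomial.coeff_C_mul]
      rw [← hc]
      exact Polynomial.isUnit_C.mpr (key c hca hcB)
    constructor
    · intro h
      have := Polynomial.natDegree_eq_zero_of_isUnit h
      omega
    · intro s t hst
      have hs0 : s ≠ 0 := fun h => hq0 (by rw [hst, h, zero_mul])
      have ht0 : t ≠ 0 := fun h => hq0 (by rw [hst, h, mul_zero])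
      have hdeg : s.natDegree + t.natDegree = 1 := by
        rw [← Polynomial.natDegree_mul hs0 ht0, ← hst, hqdeg]
      rcases Nat.eq_zero_or_pos s.natDegree with h | h
      · exact Or.inl (hfactor s t hst h)
      · exact Or.inr (hfactor t s (hst.trans (mul_comm s t)) (by omega))
  have hirr : Irreducible (subHankelDet k (m + 2)) := by
    have := (MulEquiv.irreducible_iff (φ.toMulEquiv)).mp (by
      show Irreducible (φ (subHankelDet k (m + 2)))
      rw [hφf]
      exact hq)
    exact this
  refine ⟨hirr, ((u : ℤ) : k), hεor, g, hvars, ?_⟩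
  rw [hdecomp, hCε]
  norm_num
  rfl
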